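/- The map f₀ : E → ℂ₊ \ {u₀} given by f₀(v) = √3·i·(v − 1)/(1 − |v|²) + u₀, where E = {v ∈ ℂ : |v| > 1}, is a homeomorphism, and its inverse is given by f₀⁻¹(u) = (u − conj(u₀)) / (conj(u) − conj(u₀)) for u ∈ ℂ₊ \ {u₀}. -/

import Mathlib

/-- The point `u₀ = (1 + √3 i)/2`. -/
noncomputable def u0 : ℂ := (1 + Real.sqrt 3 * Complex.I) / 2

/-- The map `f₀(v) = √3 i (v − 1)/(1 − |v|²) + u₀`. -/
noncomputable def f0 (v : ℂ) : ℂ :=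
  (Real.sqrt 3 : ℂ) * Complex.I * (v - 1) / (1 - ((‖v‖ : ℝ) : ℂ) ^ 2) + u0

lemma sqrt3_pos : (0:ℝ) < Real.sqrt 3 := Real.sqrt_pos.mpr (by norm_num)

lemma u0_re : u0.re = 1/2 := by simp [u0]
lemma u0_im : u0.im = Real.sqrt 3 / 2 := by simp [u0]

lemma conj_u0 : (starRingEnd ℂ) u0 = u0 - (Real.sqrt 3 : ℂ) * Complex.I := by
  have : ((starRingEnd ℂ)) 2 = 2 := map_ofNat _ 2
  simp [u0, this]; ring

lemma cast_abs_sq (v : ℂ) : ((‖v‖ : ℝ) : ℂ) ^ 2 = v * (starRingEnd ℂ) v := by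
  rw [← Complex.ofReal_pow, Complex.sq_norm, Complex.mul_conj]

lemma abs_one_lt_ne_one {v : ℂ} (hv : 1 < ‖v‖) : v ≠ 1 := by
  intro h; rw [h] at hv; simp at hv

lemma den_ne {v : ℂ} (hv : 1 < ‖v‖) :
    (1 : ℂ) - ((‖v‖ : ℝ) : ℂ) ^ 2 ≠ 0 := by
  have h : (1:ℝ) - (‖v‖)^2 ≠ 0 := by nlinarith
  intro hc
  apply h
  have : ((1 - (‖v‖)^2 : ℝ) : ℂ) = 0 := by push_cast; exact hc
  exact_mod_cast this

lemma left_inv {v : ℂ} (hv : 1 < ‖v‖) :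
    (f0 v - (starRingEnd ℂ) u0) / ((starRingEnd ℂ) (f0 v) - (starRingEnd ℂ) u0) = v := by
  have hd := den_ne hv
  have hv1 : v - 1 ≠ 0 := sub_ne_zero.mpr (abs_one_lt_ne_one hv)
  have hcv1 : (starRingEnd ℂ) v - 1 ≠ 0 := by
    intro h
    apply hv1
    have := congrArg (starRingEnd ℂ) h
    simpa using this
  have hs : (Real.sqrt 3 : ℂ) ≠ 0 := by
    exact_mod_cast (ne_of_gt sqrt3_pos)
  have hI := Complex.I_ne_zero
  have hconj : (starRingEnd ℂ) (f0 v) =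
      -((Real.sqrt 3 : ℂ) * Complex.I) * ((starRingEnd ℂ) v - 1) /
        (1 - ((‖v‖ : ℝ) : ℂ) ^ 2) + (starRingEnd ℂ) u0 := by
    simp only [f0, map_add, map_div₀, map_mul, map_sub, map_one, map_pow,
      Complex.conj_ofReal, Complex.conj_I]
    ring
  rw [hconj, f0, conj_u0]
  rw [cast_abs_sq] at *
  have hne : (Real.sqrt 3 : ℂ) * Complex.I * (1 - (starRingEnd ℂ) v) ≠ 0 := by
    refine mul_ne_zero (mul_ne_zero hs hI) ?_
    intro h
    apply hcv1
    have : (starRingEnd ℂ) v = 1 := by linear_combination -h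
    rw [this]; ring
  field_simp
  have hfac : (Real.sqrt 3 : ℂ) * Complex.I - (Real.sqrt 3 : ℂ) * Complex.I * (starRingEnd ℂ) v
      = (Real.sqrt 3 : ℂ) * Complex.I * (1 - (starRingEnd ℂ) v) := by ring
  ring

lemma right_inv {u : ℂ} (hu : 0 < u.im) (hneq : u ≠ u0) :
    f0 ((u - (starRingEnd ℂ) u0) / ((starRingEnd ℂ) u - (starRingEnd ℂ) u0)) = u := by
  have hs : (Real.sqrt 3 : ℂ) ≠ 0 := by exact_mod_cast (ne_of_gt sqrt3_pos)
  have h1 : u - u0 ≠ 0 := sub_ne_zero.mpr hneq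
  have h2 : (starRingEnd ℂ) u - (starRingEnd ℂ) u0 ≠ 0 := by
    intro h
    apply h1
    have := congrArg (starRingEnd ℂ) h
    simpa using this
  set w := (starRingEnd ℂ) u with hw
  set g := (u - (starRingEnd ℂ) u0) / (w - (starRingEnd ℂ) u0) with hgdef
  have hcg : (starRingEnd ℂ) g = (w - u0) / (u - u0) := by
    rw [hgdef]
    simp [map_div₀, map_sub, Complex.conj_conj, hw]
  have hsub : u - w = ((2 * u.im : ℝ) : ℂ) * Complex.I := by
    rw [hw]; exact_mod_cast Complex.sub_conj u
  have h2im : ((2 * u.im : ℝ) : ℂ) ≠ 0 := by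
    have : (0:ℝ) < 2 * u.im := by linarith
    exact_mod_cast this.ne'
  rw [conj_u0] at h2 hgdef
  have hDp : (w - (u0 - (Real.sqrt 3 : ℂ) * Complex.I)) * (u - u0) -
      (u - (u0 - (Real.sqrt 3 : ℂ) * Complex.I)) * (w - u0) ≠ 0 := by
    intro hcon
    have key : (u - w) * ((Real.sqrt 3 : ℂ) * Complex.I) = 0 := by
      linear_combination hcon
    rw [hsub] at key
    exact (mul_ne_zero (mul_ne_zero h2im Complex.I_ne_zero)
      (mul_ne_zero hs Complex.I_ne_zero)) key
  show (Real.sqrt 3 : ℂ) * Complex.I * (g - 1) / (1 - ((‖g‖ : ℝ) : ℂ) ^ 2) + u0 = u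
  rw [cast_abs_sq, hcg, hgdef]
  field_simp
  rw [← eq_sub_iff_add_eq]
  ring

lemma f0_im_pos {v : ℂ} (hv : 1 < ‖v‖) : 0 < (f0 v).im := by
  have habs : ‖v‖ ^ 2 = v.re ^ 2 + v.im ^ 2 := by
    rw [Complex.sq_norm, Complex.normSq_apply]; ring
  have h1 : 1 < v.re ^ 2 + v.im ^ 2 := by
    nlinarith [norm_nonneg v]
  have hvne : v - 1 ≠ 0 := sub_ne_zero.mpr (abs_one_lt_ne_one hv)
  have hne : 0 < (v.re - 1) * (v.re - 1) + v.im * v.im := by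
    have := Complex.normSq_pos.mpr hvne
    simpa [Complex.normSq_apply, Complex.sub_re, Complex.sub_im] using this
  have hs3 : Real.sqrt 3 ^ 2 = 3 := Real.sq_sqrt (by norm_num)
  simp only [f0, Complex.add_im, Complex.div_im, Complex.mul_im, Complex.mul_re,
    Complex.ofReal_re, Complex.ofReal_im, Complex.I_re, Complex.I_im,
    Complex.sub_re, Complex.sub_im, Complex.one_re, Complex.one_im,
    ← Complex.ofReal_pow, Complex.normSq_apply, u0_im, habs]
  have hP : (0:ℝ) < (1 - (v.re ^ 2 + v.im ^ 2)) * (1 - (v.re ^ 2 + v.im ^ 2)) + (0 - 0) * (0 - 0) := by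
    nlinarith
  rw [div_sub_div_same, div_add' _ _ _ hP.ne']
  apply div_pos _ hP
  nlinarith [mul_pos (mul_pos sqrt3_pos (by linarith : (0:ℝ) < v.re ^ 2 + v.im ^ 2 - 1)) hne]

lemma f0_ne_u0 {v : ℂ} (hv : 1 < ‖v‖) : f0 v ≠ u0 := by
  have hd := den_ne hv
  have hv1 : v - 1 ≠ 0 := sub_ne_zero.mpr (abs_one_lt_ne_one hv)
  have hs : (Real.sqrt 3 : ℂ) ≠ 0 := by exact_mod_cast (ne_of_gt sqrt3_pos)
  intro h
  have : (Real.sqrt 3 : ℂ) * Complex.I * (v - 1) / (1 - ((‖v‖ : ℝ) : ℂ) ^ 2) = 0 := by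
    have := sub_eq_zero.mpr h
    rw [f0] at this
    linear_combination this
  rcases div_eq_zero_iff.mp this with h' | h'
  · exact (mul_ne_zero (mul_ne_zero hs Complex.I_ne_zero) hv1) h'
  · exact hd (by linear_combination h')

lemma g_mem {u : ℂ} (hu : 0 < u.im) (hneq : u ≠ u0) :
    1 < ‖(u - (starRingEnd ℂ) u0) / ((starRingEnd ℂ) u - (starRingEnd ℂ) u0)‖ := by
  have h1 : u - u0 ≠ 0 := sub_ne_zero.mpr hneq
  have habs2 : ‖(starRingEnd ℂ) u - (starRingEnd ℂ) u0‖ = ‖u - u0‖ := by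
    rw [← map_sub, Complex.norm_conj]
  have hpos : 0 < ‖u - u0‖ := norm_pos_iff.mpr h1
  rw [norm_div, habs2, lt_div_iff₀ hpos, one_mul]
  have h3 : Complex.normSq (u - u0) < Complex.normSq (u - (starRingEnd ℂ) u0) := by
    simp only [Complex.normSq_apply, Complex.sub_re, Complex.sub_im, Complex.conj_re,
      Complex.conj_im, u0_re, u0_im]
    nlinarith [mul_pos sqrt3_pos hu]
  calc ‖u - u0‖ = Real.sqrt (Complex.normSq (u - u0)) := Complex.norm_def _
    _ < Real.sqrt (Complex.normSq (u - (starRingEnd ℂ) u0)) :=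
        Real.sqrt_lt_sqrt (Complex.normSq_nonneg _) h3
    _ = ‖u - (starRingEnd ℂ) u0‖ := (Complex.norm_def _).symm

lemma f0_cont : ContinuousOn f0 {v : ℂ | 1 < ‖v‖} := by
  apply ContinuousOn.add _ continuousOn_const
  apply ContinuousOn.div
  · exact (continuous_const.mul (continuous_id.sub continuous_const)).continuousOn
  · exact (continuous_const.sub
      ((Complex.continuous_ofReal.comp continuous_norm).pow 2)).continuousOn
  · intro v hv
    exact den_ne hv

lemma g_cont : ContinuousOn
    (fun u : ℂ => (u - (starRingEnd ℂ) u0) / ((starRingEnd ℂ) u - (starRingEnd ℂ) u0))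
    ({u : ℂ | 0 < u.im} \ {u0}) := by
  apply ContinuousOn.div
  · exact (continuous_id.sub continuous_const).continuousOn
  · exact (Complex.continuous_conj.sub continuous_const).continuousOn
  · rintro u ⟨_, hne⟩
    intro h
    apply hne
    have : (starRingEnd ℂ) (u - u0) = 0 := by rw [map_sub]; exact h
    have h2 : u - u0 = 0 := by
      have := congrArg (starRingEnd ℂ) this
      simpa using this
    simpa [Set.mem_singleton_iff, sub_eq_zero] using h2


/-- `f₀` is a homeomorphism from `E = {|v| > 1}` onto `ℂ₊ \ {u₀}`, with inverse
`u ↦ (u − conj u₀)/(conj u − conj u₀)`. -/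
theorem f0_homeomorphism :
    Set.BijOn f0 {v : ℂ | 1 < ‖v‖} ({u : ℂ | 0 < u.im} \ {u0}) ∧
    ContinuousOn f0 {v : ℂ | 1 < ‖v‖} ∧
    ContinuousOn (fun u : ℂ => (u - (starRingEnd ℂ) u0) / ((starRingEnd ℂ) u - (starRingEnd ℂ) u0))
      ({u : ℂ | 0 < u.im} \ {u0}) ∧
    Set.InvOn (fun u : ℂ => (u - (starRingEnd ℂ) u0) / ((starRingEnd ℂ) u - (starRingEnd ℂ) u0))
      f0 {v : ℂ | 1 < ‖v‖} ({u : ℂ | 0 < u.im} \ {u0}) := by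
  have hmapf : Set.MapsTo f0 {v : ℂ | 1 < ‖v‖} ({u : ℂ | 0 < u.im} \ {u0}) := by
    intro v hv
    exact ⟨f0_im_pos hv, f0_ne_u0 hv⟩
  have hmapg : Set.MapsTo
      (fun u : ℂ => (u - (starRingEnd ℂ) u0) / ((starRingEnd ℂ) u - (starRingEnd ℂ) u0))
      ({u : ℂ | 0 < u.im} \ {u0}) {v : ℂ | 1 < ‖v‖} := by
    rintro u ⟨hu, hne⟩
    exact g_mem hu (by simpa using hne)
  have hinv : Set.InvOn
      (fun u : ℂ => (u - (starRingEnd ℂ) u0) / ((starRingEnd ℂ) u - (starRingEnd ℂ) u0))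
      f0 {v : ℂ | 1 < ‖v‖} ({u : ℂ | 0 < u.im} \ {u0}) := by
    constructor
    · intro v hv
      exact left_inv hv
    · rintro u ⟨hu, hne⟩
      exact right_inv hu (by simpa using hne)
  exact ⟨hinv.bijOn hmapf hmapg, f0_cont, g_cont, hinv⟩
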